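/- arXiv:1401.0490 — 3 statements merged into one kernel-verified Lean document; each statement's English description precedes it below -/
import Mathlib

section
/- If μ₁ and μ₂ are eigenvalues of the n×n complex matrix polynomial Q(λ) = P(λ) + Δ(λ), then for any nonzero complex γ, the (2n−1)-st singular value of the 2n×2n block matrix F[P(μ₁,μ₂);γ] = [[P(μ₁), 0], [γ·(P(μ₁)−P(μ₂))/(μ₁−μ₂), P(μ₂)]] satisfies s_{2n−1}(F[P(μ₁,μ₂);γ]) ≤ ‖F[Δ(μ₁,μ₂);γ]‖, where F[Δ(μ₁,μ₂);γ] is the analogous block matrix built from Δ and ‖·‖ denotes the spectral norm. -/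
open Matrix BigOperators

noncomputable def sval {N : ℕ} (A : Matrix (Fin N) (Fin N) ℂ) (k : Fin N) : ℝ :=
  Real.sqrt (((Matrix.isHermitian_conjTranspose_mul_self A).eigenvalues ∘
    Tuple.sort (Matrix.isHermitian_conjTranspose_mul_self A).eigenvalues) k.rev)

noncomputable def specNorm {𝕜 : Type*} [RCLike 𝕜] {m n : ℕ} (A : Matrix (Fin m) (Fin n) 𝕜) : ℝ :=
  ‖LinearMap.toContinuousLinearMap (Matrix.toEuclideanLin A)‖

noncomputable def Fblk {n : ℕ} (A B C : Matrix (Fin n) (Fin n) ℂ) (γ : ℂ) :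
    Matrix (Fin (n + n)) (Fin (n + n)) ℂ :=
  Matrix.reindex finSumFinEquiv finSumFinEquiv (Matrix.fromBlocks A 0 (γ • C) B)

noncomputable def evalMP {n m : ℕ} (A : Fin (m + 1) → Matrix (Fin n) (Fin n) ℂ) (lam : ℂ) :
    Matrix (Fin n) (Fin n) ℂ :=
  ∑ j : Fin (m + 1), lam ^ (j : ℕ) • A j

def colPair {n : ℕ} (a b : Fin n → ℂ) : Matrix (Fin n) (Fin 2) ℂ :=
  Matrix.of fun i j => ![a i, b i] j

noncomputable def pinvFC {n m : ℕ} (V : Matrix (Fin n) (Fin m) ℂ) : Matrix (Fin m) (Fin n) ℂ :=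
  (Vᴴ * V)⁻¹ * Vᴴ


lemma quad_eq {N : ℕ} (M : Matrix (Fin N) (Fin N) ℂ) (x : EuclideanSpace ℂ (Fin N)) :
    RCLike.re (inner ℂ x (Matrix.toEuclideanLin (Mᴴ * M) x) : ℂ)
      = ‖Matrix.toEuclideanLin M x‖ ^ 2 := by
  have h : Matrix.toEuclideanLin (Mᴴ * M) x
      = Matrix.toEuclideanLin Mᴴ (Matrix.toEuclideanLin M x) := by
    simp [Matrix.toEuclideanLin_apply, Matrix.mulVec_mulVec]
  rw [h, Matrix.toEuclideanLin_conjTranspose_eq_adjoint, LinearMap.adjoint_inner_right,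
    inner_self_eq_norm_sq]

lemma eigen_expand {N : ℕ} {H : Matrix (Fin N) (Fin N) ℂ} (hH : H.IsHermitian)
    (x : EuclideanSpace ℂ (Fin N)) :
    RCLike.re (inner ℂ x (Matrix.toEuclideanLin H x) : ℂ)
      = ∑ i, hH.eigenvalues i * ‖(inner ℂ (hH.eigenvectorBasis i) x : ℂ)‖ ^ 2 := by
  set b := hH.eigenvectorBasis
  set c : Fin N → ℂ := fun i => inner ℂ (b i) x with hc
  have hTb : ∀ i, Matrix.toEuclideanLin H (b i) = (hH.eigenvalues i : ℂ) • b i := by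
    intro i
    ext j
    have := congrFun (hH.mulVec_eigenvectorBasis i) j
    simpa [Matrix.toEuclideanLin_apply] using this
  have hx : ∑ i, c i • b i = x := b.sum_repr' x
  have hTx : Matrix.toEuclideanLin H x = ∑ i, ((hH.eigenvalues i : ℂ) * c i) • b i := by
    rw [← hx, map_sum]
    simp_rw [_root_.map_smul, hTb, smul_smul, mul_comm]
  rw [hTx, inner_sum]
  simp_rw [inner_smul_right]
  rw [map_sum]
  congr 1
  ext i
  have h1 : (inner ℂ x (b i) : ℂ) = starRingEnd ℂ (c i) := (inner_conj_symm x (b i)).symm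
  rw [h1]
  have h2 : (hH.eigenvalues i : ℂ) * c i * starRingEnd ℂ (c i)
      = ((hH.eigenvalues i * ‖c i‖ ^ 2 : ℝ) : ℂ) := by
    rw [mul_assoc, Complex.mul_conj']
    push_cast
    ring
  rw [h2]
  exact Complex.ofReal_re _

lemma norm_sq_expand {N : ℕ} (b : OrthonormalBasis (Fin N) ℂ (EuclideanSpace ℂ (Fin N)))
    (x : EuclideanSpace ℂ (Fin N)) :
    ‖x‖ ^ 2 = ∑ i, ‖(inner ℂ (b i) x : ℂ)‖ ^ 2 := by
  have h := b.repr.norm_map x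
  rw [← h, EuclideanSpace.norm_eq, Real.sq_sqrt (by positivity)]
  congr 1
  ext i
  rw [b.repr_apply_apply]

lemma two_small_eigs {N : ℕ} (hN : 2 ≤ N) {H : Matrix (Fin N) (Fin N) ℂ} (hH : H.IsHermitian)
    {c : ℝ} (V : Submodule ℂ (EuclideanSpace ℂ (Fin N))) (hV : 2 ≤ Module.finrank ℂ V)
    (hbound : ∀ x ∈ V, RCLike.re (inner ℂ x (Matrix.toEuclideanLin H x) : ℂ) ≤ c * ‖x‖ ^ 2) :
    ∃ i j : Fin N, i ≠ j ∧ hH.eigenvalues i ≤ c ∧ hH.eigenvalues j ≤ c := by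
  classical
  set b := hH.eigenvectorBasis with hb
  set S : Finset (Fin N) := Finset.univ.filter (fun i => c < hH.eigenvalues i) with hS
  -- main claim
  have hcard : S.card ≤ N - 2 := by
    by_contra hcon
    push_neg at hcon
    set W : Submodule ℂ (EuclideanSpace ℂ (Fin N)) :=
      Submodule.span ℂ (Set.range (fun i : S => b i)) with hW
    have hli : LinearIndependent ℂ (fun i : S => b i) :=
      (b.orthonormal.linearIndependent).comp Subtype.val Subtype.val_injective
    have hWrank : Module.finrank ℂ W = S.card := by
      rw [hW, finrank_span_eq_card hli, Fintype.card_coe]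
    have hsum := Submodule.finrank_sup_add_finrank_inf_eq V W
    have hle : Module.finrank ℂ ↥(V ⊔ W) ≤ N := by
      have := Submodule.finrank_le (V ⊔ W)
      simpa using this
    have hpos : 0 < Module.finrank ℂ ↥(V ⊓ W) := by omega
    have : Nontrivial ↥(V ⊓ W) := Module.finrank_pos_iff.mp hpos
    obtain ⟨y, hy⟩ := exists_ne (0 : ↥(V ⊓ W))
    set x : EuclideanSpace ℂ (Fin N) := (y : EuclideanSpace ℂ (Fin N)) with hxdef
    have hxne : x ≠ 0 := fun h => hy (Subtype.ext h)
    have hxV : x ∈ V := y.2.1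
    have hxW : x ∈ W := y.2.2
    -- coefficients vanish off S
    have hcoef : ∀ i : Fin N, i ∉ S → (inner ℂ (b i) x : ℂ) = 0 := by
      intro i hi
      have hker : W ≤ LinearMap.ker ((innerSL ℂ (b i) : _ →L[ℂ] ℂ) : _ →ₗ[ℂ] ℂ) := by
        rw [hW, Submodule.span_le]
        rintro _ ⟨⟨j, hj⟩, rfl⟩
        simp only [SetLike.mem_coe, LinearMap.mem_ker, ContinuousLinearMap.coe_coe,
          innerSL_apply_apply]
        exact b.orthonormal.2 (fun h => hi (h ▸ hj))
      exact hker hxW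
    -- some coefficient nonzero
    have hex : ∃ i, (inner ℂ (b i) x : ℂ) ≠ 0 := by
      by_contra hall
      push_neg at hall
      apply hxne
      rw [← b.sum_repr' x]
      exact Finset.sum_eq_zero (fun i _ => by rw [hall i, zero_smul])
    obtain ⟨i0, hi0⟩ := hex
    have hi0S : i0 ∈ S := by
      by_contra h; exact hi0 (hcoef i0 h)
    have hstrict : c * ‖x‖ ^ 2 < RCLike.re (inner ℂ x (Matrix.toEuclideanLin H x) : ℂ) := by
      rw [eigen_expand hH x, norm_sq_expand b x, Finset.mul_sum]
      apply Finset.sum_lt_sum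
      · intro i _
        by_cases hiS : i ∈ S
        · have : c < hH.eigenvalues i := by
            rw [hS] at hiS; exact (Finset.mem_filter.1 hiS).2
          nlinarith [sq_nonneg ‖(inner ℂ (b i) x : ℂ)‖]
        · rw [hcoef i hiS]
          simp
      · refine ⟨i0, Finset.mem_univ _, ?_⟩
        have hc : c < hH.eigenvalues i0 := (Finset.mem_filter.1 hi0S).2
        have h0 : 0 < ‖(inner ℂ (b i0) x : ℂ)‖ := norm_pos_iff.2 hi0
        have : 0 < ‖(inner ℂ (b i0) x : ℂ)‖ ^ 2 := by positivity
        nlinarith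
    exact absurd (hbound x hxV) (not_le.2 hstrict)
  -- now extract two indices
  have hcompl : 2 ≤ Sᶜ.card := by
    have := Finset.card_compl S
    simp only [Fintype.card_fin] at this
    omega
  obtain ⟨i, hi, j, hj, hij⟩ := Finset.one_lt_card.1 (by omega : 1 < Sᶜ.card)
  refine ⟨i, j, hij, ?_, ?_⟩
  · have := Finset.mem_compl.1 hi
    rw [hS] at this; simpa using not_lt.1 (by simpa using this)
  · have := Finset.mem_compl.1 hj
    rw [hS] at this; simpa using not_lt.1 (by simpa using this)

lemma sorted_second {N : ℕ} (hN : 2 ≤ N) (f : Fin N → ℝ) {c : ℝ}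
    (h : ∃ i j, i ≠ j ∧ f i ≤ c ∧ f j ≤ c) :
    (f ∘ Tuple.sort f) ⟨1, by omega⟩ ≤ c := by
  obtain ⟨i, j, hij, hi, hj⟩ := h
  set σ := Tuple.sort f with hσ
  have hmono := Tuple.monotone_sort f
  have hij' : σ.symm i ≠ σ.symm j := fun h => hij (by simpa using congrArg σ h)
  have hone : (⟨1, by omega⟩ : Fin N) ≤ σ.symm i ∨ (⟨1, by omega⟩ : Fin N) ≤ σ.symm j := by
    by_contra hcon
    push_neg at hcon
    obtain ⟨h1, h2⟩ := hcon
    apply hij'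
    apply Fin.ext
    have e1 : ((⟨1, by omega⟩ : Fin N) : ℕ) = 1 := rfl
    have d1 := Fin.lt_iff_val_lt_val.1 h1
    have d2 := Fin.lt_iff_val_lt_val.1 h2
    omega
  rcases hone with h1 | h1
  · calc (f ∘ σ) ⟨1, by omega⟩ ≤ (f ∘ σ) (σ.symm i) := hmono h1
      _ = f i := by simp
      _ ≤ c := hi
  · calc (f ∘ σ) ⟨1, by omega⟩ ≤ (f ∘ σ) (σ.symm j) := hmono h1
      _ = f j := by simp
      _ ≤ c := hj

lemma key {N : ℕ} (hN : 2 ≤ N) (M E : Matrix (Fin N) (Fin N) ℂ)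
    (u v : EuclideanSpace ℂ (Fin N))
    (hu : Matrix.toEuclideanLin (M + E) u = 0) (hv : Matrix.toEuclideanLin (M + E) v = 0)
    (hind : LinearIndependent ℂ ![u, v]) :
    sval M ⟨N - 2, by omega⟩ ≤ specNorm E := by
  classical
  set c := specNorm E with hc
  have hc0 : 0 ≤ c := norm_nonneg _
  set V : Submodule ℂ (EuclideanSpace ℂ (Fin N)) := Submodule.span ℂ (Set.range ![u, v]) with hV
  have hVrank : Module.finrank ℂ V = 2 := by
    rw [hV, finrank_span_eq_card hind]
    simp
  have hker : ∀ x ∈ V, Matrix.toEuclideanLin (M + E) x = 0 := by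
    intro x hx
    have hle : V ≤ LinearMap.ker (Matrix.toEuclideanLin (M + E)) := by
      rw [hV, Submodule.span_le]
      rintro _ ⟨k, rfl⟩
      simp only [SetLike.mem_coe, LinearMap.mem_ker]
      fin_cases k
      · simpa using hu
      · simpa using hv
    exact hle hx
  have hbound : ∀ x ∈ V,
      RCLike.re (inner ℂ x (Matrix.toEuclideanLin (Mᴴ * M) x) : ℂ) ≤ c ^ 2 * ‖x‖ ^ 2 := by
    intro x hx
    rw [quad_eq]
    have hME : Matrix.toEuclideanLin M x = - Matrix.toEuclideanLin E x := by
      have h0 := hker x hx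
      rw [map_add] at h0
      simp only [LinearMap.add_apply] at h0
      exact eq_neg_of_add_eq_zero_left h0
    rw [hME, norm_neg]
    have hle : ‖Matrix.toEuclideanLin E x‖ ≤ c * ‖x‖ := by
      have h := (LinearMap.toContinuousLinearMap (Matrix.toEuclideanLin E)).le_opNorm x
      simpa only [LinearMap.coe_toContinuousLinearMap', hc, specNorm] using h
    nlinarith [norm_nonneg (Matrix.toEuclideanLin E x), norm_nonneg x]
  obtain ⟨i, j, hij, hi, hj⟩ := two_small_eigs hN (Matrix.isHermitian_conjTranspose_mul_self M) V
    (by rw [hVrank]) hbound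
  have hs := sorted_second hN (Matrix.isHermitian_conjTranspose_mul_self M).eigenvalues
    ⟨i, j, hij, hi, hj⟩
  unfold sval
  have hrev : (⟨N - 2, by omega⟩ : Fin N).rev = ⟨1, by omega⟩ := by
    apply Fin.ext
    simp only [Fin.val_rev]
    omega
  rw [hrev]
  calc Real.sqrt _ ≤ Real.sqrt (c ^ 2) := Real.sqrt_le_sqrt hs
    _ = c := Real.sqrt_sq hc0

section helpers

lemma evalMP_add {n m : ℕ} (A D : Fin (m + 1) → Matrix (Fin n) (Fin n) ℂ) (lam : ℂ) :
    evalMP (fun j => A j + D j) lam = evalMP A lam + evalMP D lam := by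
  unfold evalMP
  rw [← Finset.sum_add_distrib]
  exact Finset.sum_congr rfl fun j _ => smul_add _ _ _

lemma Fblk_add {n : ℕ} (A B C A' B' C' : Matrix (Fin n) (Fin n) ℂ) (γ : ℂ) :
    Fblk A B C γ + Fblk A' B' C' γ = Fblk (A + A') (B + B') (C + C') γ := by
  unfold Fblk
  have h : fromBlocks A 0 (γ • C) B + fromBlocks A' 0 (γ • C') B'
      = fromBlocks (A + A') 0 (γ • (C + C')) (B + B') := by
    rw [Matrix.fromBlocks_add, smul_add, add_zero]
  simp only [Matrix.reindex_apply]
  rw [← h]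
  ext i j
  simp

lemma Fblk_mulVec {n : ℕ} (A B C : Matrix (Fin n) (Fin n) ℂ) (γ : ℂ) (a b : Fin n → ℂ) :
    Fblk A B C γ *ᵥ (Sum.elim a b ∘ ⇑finSumFinEquiv.symm)
      = Sum.elim (A *ᵥ a) ((γ • C) *ᵥ a + B *ᵥ b) ∘ ⇑finSumFinEquiv.symm := by
  unfold Fblk
  rw [Matrix.reindex_apply, Matrix.submatrix_mulVec_equiv]
  congr 1
  have h : (Sum.elim a b ∘ ⇑finSumFinEquiv.symm) ∘ ⇑finSumFinEquiv.symm.symm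
      = Sum.elim a b := by
    funext x
    simp
  rw [h, Matrix.fromBlocks_mulVec]
  simp

end helpers

theorem stmt0 {n m : ℕ} (hn : 0 < n)
    (A D : Fin (m + 1) → Matrix (Fin n) (Fin n) ℂ)
    (μ₁ μ₂ : ℂ) (hμ : μ₁ ≠ μ₂)
    (h1 : ∃ x : Fin n → ℂ, x ≠ 0 ∧ (evalMP (fun j => A j + D j) μ₁).mulVec x = 0)
    (h2 : ∃ x : Fin n → ℂ, x ≠ 0 ∧ (evalMP (fun j => A j + D j) μ₂).mulVec x = 0)
    (γ : ℂ) (hγ : γ ≠ 0) :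
    sval (Fblk (evalMP A μ₁) (evalMP A μ₂)
        ((μ₁ - μ₂)⁻¹ • (evalMP A μ₁ - evalMP A μ₂)) γ) ⟨n + n - 2, by omega⟩ ≤
      specNorm (Fblk (evalMP D μ₁) (evalMP D μ₂)
        ((μ₁ - μ₂)⁻¹ • (evalMP D μ₁ - evalMP D μ₂)) γ) := by
  classical
  obtain ⟨x₁, hx₁ne, hx₁⟩ := h1
  obtain ⟨x₂, hx₂ne, hx₂⟩ := h2
  set Q₁ := evalMP (fun j => A j + D j) μ₁ with hQ₁
  set Q₂ := evalMP (fun j => A j + D j) μ₂ with hQ₂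
  set MP := Fblk (evalMP A μ₁) (evalMP A μ₂)
      ((μ₁ - μ₂)⁻¹ • (evalMP A μ₁ - evalMP A μ₂)) γ with hMP
  set ED := Fblk (evalMP D μ₁) (evalMP D μ₂)
      ((μ₁ - μ₂)⁻¹ • (evalMP D μ₁ - evalMP D μ₂)) γ with hED
  have hKeq : MP + ED = Fblk Q₁ Q₂ ((μ₁ - μ₂)⁻¹ • (Q₁ - Q₂)) γ := by
    rw [hMP, hED, Fblk_add, hQ₁, hQ₂, evalMP_add, evalMP_add]
    congr 1
    rw [← smul_add]
    congr 1
    abel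
  -- kernel vectors
  set α : ℂ := γ * (μ₁ - μ₂)⁻¹ with hα
  set uf : Fin (n + n) → ℂ := Sum.elim 0 x₂ ∘ ⇑finSumFinEquiv.symm with huf
  set vf : Fin (n + n) → ℂ := Sum.elim x₁ (α • x₁) ∘ ⇑finSumFinEquiv.symm with hvf
  have hKu : Fblk Q₁ Q₂ ((μ₁ - μ₂)⁻¹ • (Q₁ - Q₂)) γ *ᵥ uf = 0 := by
    rw [huf, Fblk_mulVec]
    rw [Matrix.mulVec_zero, Matrix.mulVec_zero, hx₂, zero_add]
    funext i
    simp
  have hKv : Fblk Q₁ Q₂ ((μ₁ - μ₂)⁻¹ • (Q₁ - Q₂)) γ *ᵥ vf = 0 := by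
    rw [hvf, Fblk_mulVec, hx₁]
    have hCx : (γ • ((μ₁ - μ₂)⁻¹ • (Q₁ - Q₂))) *ᵥ x₁ = α • ((Q₁ - Q₂) *ᵥ x₁) := by
      rw [smul_smul, ← hα, Matrix.smul_mulVec]
    have hQx : Q₂ *ᵥ (α • x₁) = α • (Q₂ *ᵥ x₁) := (Matrix.mulVec_smul _ _ _)
    rw [hCx, hQx, Matrix.sub_mulVec, hx₁, zero_sub, smul_neg, neg_add_cancel]
    funext i
    simp
  -- euclidean vectors
  set u : EuclideanSpace ℂ (Fin (n + n)) := (WithLp.equiv 2 (Fin (n + n) → ℂ)).symm uf with hu'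
  set v : EuclideanSpace ℂ (Fin (n + n)) := (WithLp.equiv 2 (Fin (n + n) → ℂ)).symm vf with hv'
  have hu0 : Matrix.toEuclideanLin (MP + ED) u = 0 := by
    rw [hu', WithLp.equiv_symm_apply, Matrix.toEuclideanLin_apply_piLp_toLp, hKeq, hKu]
    simp
  have hv0 : Matrix.toEuclideanLin (MP + ED) v = 0 := by
    rw [hv', WithLp.equiv_symm_apply, Matrix.toEuclideanLin_apply_piLp_toLp, hKeq, hKv]
    simp
  -- linear independence
  obtain ⟨i₁, hi₁⟩ := Function.ne_iff.1 hx₁ne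
  obtain ⟨i₂, hi₂⟩ := Function.ne_iff.1 hx₂ne
  have hind : LinearIndependent ℂ ![u, v] := by
    rw [LinearIndependent.pair_iff]
    intro s t hst
    have hfun : ∀ k : Fin (n + n), s * uf k + t * vf k = 0 := by
      intro k
      exact congrFun (congrArg (WithLp.equiv 2 (Fin (n + n) → ℂ)) hst) k
    have ht : t = 0 := by
      have h := hfun (finSumFinEquiv (Sum.inl i₁))
      rw [huf, hvf] at h
      simp only [Function.comp_apply, Equiv.symm_apply_apply, Sum.elim_inl, Pi.zero_apply,
        mul_zero, zero_add] at h
      exact (mul_eq_zero.1 h).resolve_right hi₁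
    have hs : s = 0 := by
      have h := hfun (finSumFinEquiv (Sum.inr i₂))
      rw [huf, hvf, ht] at h
      simp only [Function.comp_apply, Equiv.symm_apply_apply, Sum.elim_inr, Pi.smul_apply,
        zero_mul, add_zero, smul_eq_mul] at h
      exact (mul_eq_zero.1 h).resolve_right hi₂
    exact ⟨hs, ht⟩
  exact key (by omega) MP ED u v hu0 hv0 hind
end

section
/- Suppose ([u₁;u₂], [v₁;v₂]) is a pair of left and right singular vectors of F = F[P(μ₁,μ₂);γ*] corresponding to the singular value s* > 0, i.e., F[v₁;v₂] = s*[u₁;u₂] and [u₁*, u₂*]F = s*[v₁*, v₂*]. If additionally u₂* P[μ₁,μ₂] v₁ = 0, where P[μ₁,μ₂] = (P(μ₁)−P(μ₂))/(μ₁−μ₂), then u₂* u₁ = v₂* v₁. -/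
open Matrix BigOperators

theorem stmt3 {n m : ℕ} (A : Fin (m + 1) → Matrix (Fin n) (Fin n) ℂ)
    (μ₁ μ₂ : ℂ) (hμ : μ₁ ≠ μ₂) (γ : ℝ) (hγ : 0 < γ) (s : ℝ) (hs : 0 < s)
    (u₁ u₂ v₁ v₂ : Fin n → ℂ)
    (h1 : (evalMP A μ₁).mulVec v₁ = (s : ℂ) • u₁)
    (h2 : (γ : ℂ) • ((μ₁ - μ₂)⁻¹ • (evalMP A μ₁ - evalMP A μ₂)).mulVec v₁
          + (evalMP A μ₂).mulVec v₂ = (s : ℂ) • u₂)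
    (h3 : Matrix.vecMul (star u₁) (evalMP A μ₁)
          + (γ : ℂ) • Matrix.vecMul (star u₂) ((μ₁ - μ₂)⁻¹ • (evalMP A μ₁ - evalMP A μ₂))
          = (s : ℂ) • star v₁)
    (h4 : Matrix.vecMul (star u₂) (evalMP A μ₂) = (s : ℂ) • star v₂)
    (horth : dotProduct (star u₂)
        (((μ₁ - μ₂)⁻¹ • (evalMP A μ₁ - evalMP A μ₂)).mulVec v₁) = 0) :
    dotProduct (star u₂) u₁ = dotProduct (star v₂) v₁ := by
  set P₁ := evalMP A μ₁
  set P₂ := evalMP A μ₂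
  have hsne : (s : ℂ) ≠ 0 := by exact_mod_cast hs.ne'
  have hμne : (μ₁ - μ₂)⁻¹ ≠ 0 := inv_ne_zero (sub_ne_zero.mpr hμ)
  have key : dotProduct (star u₂) (P₁.mulVec v₁)
      = dotProduct (star u₂) (P₂.mulVec v₁) := by
    have := horth
    rw [Matrix.smul_mulVec, dotProduct_smul, smul_eq_mul,
      mul_eq_zero] at this
    rcases this with h | h
    · exact absurd h hμne
    · have h' : dotProduct (star u₂) ((P₁ - P₂).mulVec v₁) = 0 := h
      rw [Matrix.sub_mulVec, dotProduct_sub, sub_eq_zero] at h'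
      exact h'
  have L : (s : ℂ) * dotProduct (star u₂) u₁
      = dotProduct (star u₂) (P₁.mulVec v₁) := by
    rw [h1, dotProduct_smul, smul_eq_mul]
  have R : (s : ℂ) * dotProduct (star v₂) v₁
      = dotProduct (star u₂) (P₂.mulVec v₁) := by
    rw [Matrix.dotProduct_mulVec, h4, smul_dotProduct, smul_eq_mul]
  exact mul_left_cancel₀ hsne (L.trans (key.trans R.symm))
end

section
/- (Case γ* = 0) Let u_i, v_i ∈ ℂⁿ (i = 1,2) be left and right singular vectors of P(μ_i) for the smallest singular value σ_i = s_n(P(μ_i)), i.e., P(μ_i)v_i = σ_i u_i with ‖u_i‖ = ‖v_i‖ = 1. If v₁ and v₂ are linearly independent, then the constant matrix Δ₀ = −[u₁ u₂]·diag(σ₁,σ₂)·[v₁ v₂]^† satisfies (P(μ_i) + Δ₀)v_i = 0 for i = 1,2; hence the matrix polynomial Q₀(λ) = P(λ) + Δ₀ has μ₁ and μ₂ as eigenvalues with eigenvectors v₁ and v₂. -/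
open Matrix BigOperators

open scoped ComplexOrder in
lemma aux_unit {n : ℕ} (v₁ v₂ : Fin n → ℂ)
    (hli : LinearIndependent ℂ ![v₁, v₂]) :
    IsUnit ((colPair v₁ v₂)ᴴ * colPair v₁ v₂) := by
  set V : Matrix (Fin n) (Fin 2) ℂ := colPair v₁ v₂
  have hker : ∀ x : Fin 2 → ℂ, V.mulVec x = 0 → x = 0 := by
    intro x hx
    have := Fintype.linearIndependent_iff.mp hli x ?_
    · funext i; exact this i
    · funext i
      have := congr_fun hx i
      simpa [V, colPair, Matrix.mulVec, dotProduct, Fin.sum_univ_two, mul_comm] using this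
  rw [← Matrix.mulVec_injective_iff_isUnit]
  intro x y hxy
  have hz : (Vᴴ * V).mulVec (x - y) = 0 := by
    rw [Matrix.mulVec_sub, hxy, sub_self]
  have h0 : V.mulVec (x - y) = 0 := by
    have hd : dotProduct (star (V.mulVec (x - y))) (V.mulVec (x - y)) = 0 := by
      have : dotProduct (star (x - y)) ((Vᴴ * V).mulVec (x - y)) = 0 := by
        rw [hz, dotProduct_zero]
      rwa [← Matrix.mulVec_mulVec, Matrix.dotProduct_mulVec,
        Matrix.vecMul_conjTranspose, star_star] at this
    exact dotProduct_star_self_eq_zero.mp hd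
  exact sub_eq_zero.mp (hker _ h0)

lemma aux_pinv {n : ℕ} (v₁ v₂ : Fin n → ℂ)
    (hli : LinearIndependent ℂ ![v₁, v₂]) :
    pinvFC (colPair v₁ v₂) * colPair v₁ v₂ = 1 := by
  have h := aux_unit v₁ v₂ hli
  rw [pinvFC, Matrix.mul_assoc, Matrix.nonsing_inv_mul _ (Matrix.isUnit_iff_isUnit_det _ |>.mp h)]

theorem stmt12 {n m : ℕ} (hn : 0 < n) (A : Fin (m + 1) → Matrix (Fin n) (Fin n) ℂ)
    (μ₁ μ₂ : ℂ) (hμ : μ₁ ≠ μ₂) (σ₁ σ₂ : ℝ)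
    (u₁ u₂ v₁ v₂ : Fin n → ℂ)
    (hσ₁ : σ₁ = sval (evalMP A μ₁) ⟨n - 1, by omega⟩)
    (hσ₂ : σ₂ = sval (evalMP A μ₂) ⟨n - 1, by omega⟩)
    (h1 : (evalMP A μ₁).mulVec v₁ = (σ₁ : ℂ) • u₁)
    (h1' : Matrix.vecMul (star u₁) (evalMP A μ₁) = (σ₁ : ℂ) • star v₁)
    (h2 : (evalMP A μ₂).mulVec v₂ = (σ₂ : ℂ) • u₂)
    (h2' : Matrix.vecMul (star u₂) (evalMP A μ₂) = (σ₂ : ℂ) • star v₂)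
    (hu₁ : dotProduct (star u₁) u₁ = 1)
    (hu₂ : dotProduct (star u₂) u₂ = 1)
    (hv₁ : dotProduct (star v₁) v₁ = 1)
    (hv₂ : dotProduct (star v₂) v₂ = 1)
    (hli : LinearIndependent ℂ ![v₁, v₂]) :
    let Δ₀ : Matrix (Fin n) (Fin n) ℂ :=
      -(colPair u₁ u₂ * Matrix.diagonal ![(σ₁ : ℂ), (σ₂ : ℂ)] * pinvFC (colPair v₁ v₂))
    (evalMP A μ₁ + Δ₀).mulVec v₁ = 0 ∧ (evalMP A μ₂ + Δ₀).mulVec v₂ = 0 := by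

  intro Δ₀
  set V : Matrix (Fin n) (Fin 2) ℂ := colPair v₁ v₂ with hV
  have hpinv := aux_pinv v₁ v₂ hli
  have key : ∀ (w : Fin n → ℂ) (e : Fin 2 → ℂ), V.mulVec e = w →
      (pinvFC V).mulVec w = e := by
    intro w e he
    rw [← he, Matrix.mulVec_mulVec, hpinv, Matrix.one_mulVec]
  have hV1 : V.mulVec ![1, 0] = v₁ := by
    funext i; simp [V, colPair, Matrix.mulVec, dotProduct, Fin.sum_univ_two]
  have hV2 : V.mulVec ![0, 1] = v₂ := by
    funext i; simp [V, colPair, Matrix.mulVec, dotProduct, Fin.sum_univ_two]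
  have hUD1 : (colPair u₁ u₂ * Matrix.diagonal ![(σ₁ : ℂ), (σ₂ : ℂ)]).mulVec ![1, 0]
      = (σ₁ : ℂ) • u₁ := by
    funext i
    simp [colPair, Matrix.mulVec, dotProduct, Matrix.mul_apply,
      Fin.sum_univ_two, Matrix.diagonal, mul_comm]
  have hUD2 : (colPair u₁ u₂ * Matrix.diagonal ![(σ₁ : ℂ), (σ₂ : ℂ)]).mulVec ![0, 1]
      = (σ₂ : ℂ) • u₂ := by
    funext i
    simp [colPair, Matrix.mulVec, dotProduct, Matrix.mul_apply,
      Fin.sum_univ_two, Matrix.diagonal, mul_comm]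
  have hΔ1 : Δ₀.mulVec v₁ = -((σ₁ : ℂ) • u₁) := by
    show (-(colPair u₁ u₂ * Matrix.diagonal ![(σ₁ : ℂ), (σ₂ : ℂ)] * pinvFC V)).mulVec v₁ = _
    rw [Matrix.neg_mulVec, ← Matrix.mulVec_mulVec, key v₁ ![1, 0] hV1, hUD1]
  have hΔ2 : Δ₀.mulVec v₂ = -((σ₂ : ℂ) • u₂) := by
    show (-(colPair u₁ u₂ * Matrix.diagonal ![(σ₁ : ℂ), (σ₂ : ℂ)] * pinvFC V)).mulVec v₂ = _
    rw [Matrix.neg_mulVec, ← Matrix.mulVec_mulVec, key v₂ ![0, 1] hV2, hUD2]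
  constructor
  · rw [Matrix.add_mulVec, h1, hΔ1, add_neg_cancel]
  · rw [Matrix.add_mulVec, h2, hΔ2, add_neg_cancel]
end
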